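/- In the free noncommutative algebra K⟨x,y,z⟩ with DEGLEX order where x > y > z, the Gröbner basis of the two-sided ideal generated by {x², xy − zx} is {x², xy − zx} ∪ { x zⁱ x : i ≥ 1 }. -/

import Mathlib

open FreeMonoid

/-- Degree-lexicographic order on words in `x, y, z` (with `x = 0 > y = 1 > z = 2`). -/
def deglex3 (u v : FreeMonoid (Fin 3)) : Prop :=
  u.toList.length < v.toList.length ∨
    (u.toList.length = v.toList.length ∧
      List.Lex (fun a b : Fin 3 => b < a) u.toList v.toList)

namespace Stmt16Aux

abbrev W := List (Fin 3)
abbrev r3 : Fin 3 → Fin 3 → Prop := fun a b => b < a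

/-- push an `x` (= 0) into a word -/
def px : W → Option W
  | [] => some [0]
  | a :: s =>
    if a = 1 then (px s).map (2 :: ·)
    else if a = 2 then
      (if (s.dropWhile (· = 2)).head? = some 0 then none else some (0 :: 2 :: s))
    else none

/-- normal form of a word, `none` means it reduces to `0` -/
def nf : W → Option W
  | [] => some []
  | a :: s => (nf s).bind (fun t => if a = 0 then px t else some (a :: t))

theorem fin3_cases : ∀ a : Fin 3, a = 0 ∨ a = 1 ∨ a = 2 := by decide

theorem px_nil : px [] = some [0] := rfl
theorem px_zero (s : W) : px (0 :: s) = none := rfl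
theorem px_one (s : W) : px (1 :: s) = (px s).map (2 :: ·) := rfl
theorem px_two (s : W) : px (2 :: s) =
    if (s.dropWhile (· = 2)).head? = some 0 then none else some (0 :: 2 :: s) := rfl
theorem nf_nil : nf [] = some [] := rfl
theorem nf_cons (a : Fin 3) (s : W) :
    nf (a :: s) = (nf s).bind (fun t => if a = 0 then px t else some (a :: t)) := rfl

theorem px_shape : ∀ {s m : W}, px s = some m →
    ∃ k r, m = List.replicate k 2 ++ 0 :: r := by
  intro s
  induction s with
  | nil =>
    intro m h
    rw [px_nil, Option.some.injEq] at h
    exact ⟨0, [], h.symm⟩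
  | cons a s ih =>
    intro m h
    rcases fin3_cases a with rfl | rfl | rfl
    · rw [px_zero] at h; exact absurd h (by simp)
    · rw [px_one] at h
      cases hps : px s with
      | none => rw [hps] at h; exact absurd h (by simp)
      | some m' =>
        rw [hps, Option.map_some, Option.some.injEq] at h
        obtain ⟨k, r, rfl⟩ := ih hps
        exact ⟨k + 1, r, by simp [List.replicate_succ, ← h]⟩
    · rw [px_two] at h
      split at h
      · exact absurd h (by simp)
      · rw [Option.some.injEq] at h
        exact ⟨0, 2 :: s, by simp [← h]⟩

theorem dropWhile_replicate (k : ℕ) (r : W) :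
    (List.replicate k (2:Fin 3) ++ 0 :: r).dropWhile (· = 2) = 0 :: r := by
  induction k with
  | zero => simp [List.dropWhile]
  | succ k ih => simpa [List.replicate_succ, List.dropWhile] using ih

theorem px_px {s m : W} (h : px s = some m) : px m = none := by
  obtain ⟨k, r, rfl⟩ := px_shape h
  cases k with
  | zero => simp [px_zero]
  | succ k =>
    rw [List.replicate_succ, List.cons_append, px_two, dropWhile_replicate,
      if_pos (by simp)]

theorem px_len : ∀ {s m : W}, px s = some m → m.length = s.length + 1 := by
  intro s
  induction s with
  | nil => intro m h; rw [px_nil, Option.some.injEq] at h; simp [← h]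
  | cons a s ih =>
    intro m h
    rcases fin3_cases a with rfl | rfl | rfl
    · rw [px_zero] at h; exact absurd h (by simp)
    · rw [px_one] at h
      cases hps : px s with
      | none => rw [hps] at h; exact absurd h (by simp)
      | some m' =>
        rw [hps, Option.map_some, Option.some.injEq] at h
        simp [← h, ih hps]
    · rw [px_two] at h
      split at h
      · exact absurd h (by simp)
      · rw [Option.some.injEq] at h; simp [← h]

theorem px_le : ∀ {s m : W}, px s = some m → m = 0 :: s ∨ List.Lex r3 m (0 :: s) := by
  intro s m h
  cases s with
  | nil => rw [px_nil, Option.some.injEq] at h; exact Or.inl h.symm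
  | cons a s =>
    rcases fin3_cases a with rfl | rfl | rfl
    · rw [px_zero] at h; exact absurd h (by simp)
    · rw [px_one] at h
      cases hps : px s with
      | none => rw [hps] at h; exact absurd h (by simp)
      | some m' =>
        rw [hps, Option.map_some, Option.some.injEq] at h
        rw [← h]
        exact Or.inr (List.Lex.rel (by decide))
    · rw [px_two] at h
      split at h
      · exact absurd h (by simp)
      · rw [Option.some.injEq] at h
        exact Or.inl h.symm

theorem lex_trans : ∀ {a b c : W}, List.Lex r3 a b → List.Lex r3 b c → List.Lex r3 a c := by
  intro a b c h1
  induction h1 generalizing c with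
  | nil =>
    intro h2
    cases h2 <;> exact List.Lex.nil
  | cons h ih =>
    intro h2
    cases h2 with
    | cons h2 => exact List.Lex.cons (ih h2)
    | rel h2 => exact List.Lex.rel h2
  | rel h =>
    intro h2
    cases h2 with
    | cons h2 => exact List.Lex.rel h
    | rel h2 => exact List.Lex.rel (lt_trans h2 h)

theorem lex_irrefl : ∀ (l : W), ¬ List.Lex r3 l l := by
  intro l
  induction l with
  | nil => exact fun h => by cases h
  | cons a s ih =>
    intro h
    cases h with
    | cons h => exact ih h
    | rel h => exact absurd h (lt_irrefl a)

theorem lex_asymm {a b : W} (h1 : List.Lex r3 a b) (h2 : List.Lex r3 b a) : False :=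
  lex_irrefl a (lex_trans h1 h2)

theorem nf_len : ∀ {w w' : W}, nf w = some w' → w'.length = w.length := by
  intro w
  induction w with
  | nil => intro w' h; rw [nf_nil, Option.some.injEq] at h; simp [← h]
  | cons a s ih =>
    intro w' h
    rw [nf_cons, Option.bind_eq_some_iff] at h
    obtain ⟨t, ht, h⟩ := h
    by_cases h0 : a = 0
    · rw [if_pos h0] at h
      rw [px_len h, ih ht]
      simp
    · rw [if_neg h0, Option.some.injEq] at h
      simp [← h, ih ht]

theorem nf_le : ∀ {w w' : W}, nf w = some w' → w' = w ∨ List.Lex r3 w' w := by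
  intro w
  induction w with
  | nil => intro w' h; rw [nf_nil, Option.some.injEq] at h; exact Or.inl h.symm
  | cons a s ih =>
    intro w' h
    rw [nf_cons, Option.bind_eq_some_iff] at h
    obtain ⟨t, ht, h⟩ := h
    have hts := ih ht
    by_cases h0 : a = 0
    · rw [if_pos h0] at h
      subst h0
      have h1 := px_le h
      rcases hts with rfl | hts
      · exact h1
      · rcases h1 with rfl | h1
        · exact Or.inr (List.Lex.cons hts)
        · exact Or.inr (lex_trans h1 (List.Lex.cons hts))
    · rw [if_neg h0, Option.some.injEq] at h
      subst h
      rcases hts with rfl | hts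
      · exact Or.inl rfl
      · exact Or.inr (List.Lex.cons hts)

theorem nfA : ∀ (u v : W), nf (u ++ [0, 0] ++ v) = none := by
  intro u
  induction u with
  | nil =>
    intro v
    show nf (0 :: 0 :: v) = none
    cases hv : nf v with
    | none => rw [nf_cons, nf_cons, hv]; rfl
    | some t =>
      rw [nf_cons, nf_cons, hv, Option.bind_some, if_pos rfl]
      cases hpt : px t with
      | none => rfl
      | some m => rw [Option.bind_some, if_pos rfl, px_px hpt]
  | cons a u ih =>
    intro v
    show nf (a :: (u ++ [0, 0] ++ v)) = none
    rw [nf_cons, ih v]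
    rfl

theorem nfB : ∀ (u v : W), nf (u ++ [0, 1] ++ v) = nf (u ++ [2, 0] ++ v) := by
  intro u
  induction u with
  | nil =>
    intro v
    show nf (0 :: 1 :: v) = nf (2 :: 0 :: v)
    rw [nf_cons, nf_cons, nf_cons, nf_cons]
    cases hv : nf v with
    | none => rfl
    | some t =>
      simp only [Option.bind_some, if_pos rfl, if_neg (by decide : ¬(1:Fin 3) = 0),
        if_neg (by decide : ¬(2:Fin 3) = 0), Option.bind_some]
      rw [px_one]
      cases hpt : px t with
      | none => rfl
      | some m => rfl
  | cons a u ih =>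
    intro v
    show nf (a :: (u ++ [0, 1] ++ v)) = nf (a :: (u ++ [2, 0] ++ v))
    rw [nf_cons, nf_cons, ih v]

theorem nf_normal : ∀ (w : W), (¬ [0, 0] <:+: w) → (¬ [0, 1] <:+: w) →
    (∀ i : ℕ, 1 ≤ i → ¬ (0 :: (List.replicate i 2 ++ [0])) <:+: w) → nf w = some w := by
  intro w
  induction w with
  | nil => intro _ _ _; rfl
  | cons a s ih =>
    intro hxx hxy hxz
    have hs : nf s = some s := by
      refine ih (fun h => hxx ?_) (fun h => hxy ?_) (fun i hi h => hxz i hi ?_) <;>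
        exact h.trans (List.suffix_cons a s).isInfix
    rw [nf_cons, hs, Option.bind_some]
    by_cases h0 : a = 0
    · subst h0
      rw [if_pos rfl]
      cases s with
      | nil => rfl
      | cons b s' =>
        rcases fin3_cases b with rfl | rfl | rfl
        · exact absurd ⟨[], s', rfl⟩ hxx
        · exact absurd ⟨[], s', rfl⟩ hxy
        · rw [px_two, if_neg]
          intro hcond
          obtain ⟨r, hr⟩ : ∃ r, s'.dropWhile (· = 2) = 0 :: r := by
            cases hd : s'.dropWhile (· = 2) with
            | nil => rw [hd] at hcond; exact absurd hcond (by simp)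
            | cons c r =>
              rw [hd] at hcond
              simp only [List.head?_cons, Option.some.injEq] at hcond
              exact ⟨r, by rw [hcond]⟩
          set k := (s'.takeWhile (· = 2)).length with hk
          have htw : s'.takeWhile (· = 2) = List.replicate k 2 := by
            apply List.eq_replicate_of_mem
            intro b hb
            have := List.mem_takeWhile_imp hb
            simpa using this
          have hs' : s' = List.replicate k 2 ++ 0 :: r := by
            conv_lhs => rw [← List.takeWhile_append_dropWhile (p := (· = 2)) (l := s')]
            rw [htw, hr]
          apply hxz (k + 1) (by omega)
          refine ⟨[], r, ?_⟩
          simp [hs', List.replicate_succ]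
    · rw [if_neg h0]

section Algebra
variable {K : Type*} [Field K]

noncomputable def e (K : Type*) [Field K] (o : Option W) :
    MonoidAlgebra K (FreeMonoid (Fin 3)) :=
  o.elim 0 (fun w => MonoidAlgebra.single (FreeMonoid.ofList w) 1)

noncomputable def N (f : MonoidAlgebra K (FreeMonoid (Fin 3))) :
    MonoidAlgebra K (FreeMonoid (Fin 3)) :=
  Finsupp.sum f.coeff (fun w c => c • e K (nf (FreeMonoid.toList w)))

theorem N_zero : N (0 : MonoidAlgebra K (FreeMonoid (Fin 3))) = 0 := by
  unfold N; rw [MonoidAlgebra.coeff_zero]; exact Finsupp.sum_zero_index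

theorem N_add (f g : MonoidAlgebra K (FreeMonoid (Fin 3))) : N (f + g) = N f + N g := by
  unfold N; rw [MonoidAlgebra.coeff_add]; exact Finsupp.sum_add_index' (fun _ => zero_smul _ _) (fun _ b c => add_smul b c _)

theorem N_single (w : FreeMonoid (Fin 3)) (c : K) :
    N (MonoidAlgebra.single w c) = c • e K (nf (FreeMonoid.toList w)) := by
  unfold N; rw [MonoidAlgebra.coeff_single]; exact Finsupp.sum_single_index (zero_smul _ _)

theorem N_neg (f : MonoidAlgebra K (FreeMonoid (Fin 3))) : N (-f) = - N f := by
  have h : N f + N (-f) = 0 := by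
    rw [← N_add]
    simp [N_zero]
  exact eq_neg_of_add_eq_zero_right h

theorem N_sub (f g : MonoidAlgebra K (FreeMonoid (Fin 3))) : N (f - g) = N f - N g := by
  rw [sub_eq_add_neg, N_add, N_neg, sub_eq_add_neg]

theorem N_pg1q (p q : MonoidAlgebra K (FreeMonoid (Fin 3))) :
    N (p * MonoidAlgebra.single (FreeMonoid.ofList [0, 0]) (1 : K) * q) = 0 := by
  induction p using MonoidAlgebra.induction_linear with
  | zero => rw [zero_mul, zero_mul, N_zero]
  | add f g hf hg => rw [add_mul, add_mul, N_add, hf, hg, add_zero]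
  | single u c =>
    induction q using MonoidAlgebra.induction_linear with
    | zero => rw [mul_zero, N_zero]
    | add f g hf hg => rw [mul_add, N_add, hf, hg, add_zero]
    | single v d =>
      rw [MonoidAlgebra.single_mul_single, MonoidAlgebra.single_mul_single, N_single]
      have h : FreeMonoid.toList (u * FreeMonoid.ofList [0, 0] * v)
          = FreeMonoid.toList u ++ [0, 0] ++ FreeMonoid.toList v := rfl
      rw [h, nfA]
      simp [e]

theorem N_pq_eq (p q : MonoidAlgebra K (FreeMonoid (Fin 3))) :
    N (p * MonoidAlgebra.single (FreeMonoid.ofList [0, 1]) (1 : K) * q)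
      = N (p * MonoidAlgebra.single (FreeMonoid.ofList [2, 0]) (1 : K) * q) := by
  induction p using MonoidAlgebra.induction_linear with
  | zero => simp only [zero_mul]
  | add f g hf hg => rw [add_mul, add_mul, add_mul, add_mul, N_add, N_add, hf, hg]
  | single u c =>
    induction q using MonoidAlgebra.induction_linear with
    | zero => simp only [mul_zero]
    | add f g hf hg => rw [mul_add, mul_add, N_add, N_add, hf, hg]
    | single v d =>
      rw [MonoidAlgebra.single_mul_single, MonoidAlgebra.single_mul_single,
        MonoidAlgebra.single_mul_single, MonoidAlgebra.single_mul_single, N_single, N_single]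
      have h1 : FreeMonoid.toList (u * FreeMonoid.ofList [0, 1] * v)
          = FreeMonoid.toList u ++ [0, 1] ++ FreeMonoid.toList v := rfl
      have h2 : FreeMonoid.toList (u * FreeMonoid.ofList [2, 0] * v)
          = FreeMonoid.toList u ++ [2, 0] ++ FreeMonoid.toList v := rfl
      rw [h1, h2, nfB]

theorem N_pg2q (p q : MonoidAlgebra K (FreeMonoid (Fin 3))) :
    N (p * (MonoidAlgebra.single (FreeMonoid.ofList [0, 1]) (1 : K)
      - MonoidAlgebra.single (FreeMonoid.ofList [2, 0]) (1 : K)) * q) = 0 := by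
  rw [mul_sub, sub_mul, N_sub, sub_eq_zero]
  exact N_pq_eq p q

theorem N_apply_eq (f : MonoidAlgebra K (FreeMonoid (Fin 3))) (L : FreeMonoid (Fin 3))
    (hmax : ∀ w ∈ f.coeff.support, w ≠ L → deglex3 w L)
    (hnfL : nf (FreeMonoid.toList L) = some (FreeMonoid.toList L)) :
    (N f).coeff L = f.coeff L := by
  rw [N, MonoidAlgebra.coeff_finsuppSum, Finsupp.sum_apply, Finsupp.sum]
  refine (Finset.sum_eq_single L ?_ ?_).trans ?_
  · intro w hw hwL
    have hdg := hmax w hw hwL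
    cases hnw : nf (FreeMonoid.toList w) with
    | none =>
      show (f.coeff w • e K none).coeff L = 0
      simp [e]
    | some w' =>
      show (f.coeff w • e K (some w')).coeff L = 0
      have hne : FreeMonoid.ofList w' ≠ L := by
        intro heq
        have hw' : w' = FreeMonoid.toList L := by rw [← heq, toList_ofList]
        rcases nf_le hnw with h1 | h1
        · apply hwL
          apply FreeMonoid.toList.injective
          rw [← h1, hw']
        · rcases hdg with hlen | ⟨hlen, hlex⟩
          · have hl := nf_len hnw
            rw [hw'] at hl
            omega
          · exact absurd hlex (fun h => lex_asymm (hw' ▸ h1) h)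
      show (f.coeff w • MonoidAlgebra.single (FreeMonoid.ofList w') (1:K)).coeff L = 0
      rw [MonoidAlgebra.coeff_smul, Finsupp.smul_apply, MonoidAlgebra.coeff_single, Finsupp.single_eq_of_ne' hne, smul_zero]
  · intro hL
    rw [Finsupp.notMem_support_iff] at hL
    show (f.coeff L • e K (nf (FreeMonoid.toList L))).coeff L = 0
    rw [hL, zero_smul, MonoidAlgebra.coeff_zero, Finsupp.zero_apply]
  · show (f.coeff L • e K (nf (FreeMonoid.toList L))).coeff L = f.coeff L
    rw [hnfL]
    show (f.coeff L • MonoidAlgebra.single (FreeMonoid.ofList (FreeMonoid.toList L)) (1:K)).coeff L = f.coeff L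
    rw [ofList_toList, MonoidAlgebra.coeff_smul, Finsupp.smul_apply, MonoidAlgebra.coeff_single, Finsupp.single_eq_same, smul_eq_mul, mul_one]

end Algebra
end Stmt16Aux

open Stmt16Aux in
/-- In `K⟨x,y,z⟩` with DEGLEX (`x > y > z`), the set
`{x², xy - zx} ∪ {xzⁱx : i ≥ 1}` is a Gröbner basis of the two-sided ideal
generated by `{x², xy - zx}`. -/
theorem stmt_16 {K : Type*} [Field K]
    (lm : MonoidAlgebra K (FreeMonoid (Fin 3)) → FreeMonoid (Fin 3))
    (hlm : ∀ f : MonoidAlgebra K (FreeMonoid (Fin 3)), f ≠ 0 →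
      lm f ∈ f.coeff.support ∧ ∀ w ∈ f.coeff.support, w ≠ lm f → deglex3 w (lm f)) :
    let x : FreeMonoid (Fin 3) := FreeMonoid.of 0
    let y : FreeMonoid (Fin 3) := FreeMonoid.of 1
    let z : FreeMonoid (Fin 3) := FreeMonoid.of 2
    let g1 : MonoidAlgebra K (FreeMonoid (Fin 3)) := MonoidAlgebra.single (x * x) 1
    let g2 : MonoidAlgebra K (FreeMonoid (Fin 3)) :=
      MonoidAlgebra.single (x * y) 1 - MonoidAlgebra.single (z * x) 1
    let I : Ideal (MonoidAlgebra K (FreeMonoid (Fin 3))) :=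
      Ideal.span {q | ∃ a b : MonoidAlgebra K (FreeMonoid (Fin 3)),
        q = a * g1 * b ∨ q = a * g2 * b}
    let G : Set (MonoidAlgebra K (FreeMonoid (Fin 3))) :=
      insert g1 (insert g2 {p | ∃ i : ℕ, 1 ≤ i ∧
        p = MonoidAlgebra.single (x * z ^ i * x) (1 : K)})
    (∀ g ∈ G, g ∈ I) ∧
      ∀ f ∈ I, f ≠ 0 → ∃ g ∈ G, g ≠ 0 ∧ (lm g).toList <:+: (lm f).toList := by
  intro x y z g1 g2 I G
  classical
  have hg2def : g2 = MonoidAlgebra.single (x * y) 1 - MonoidAlgebra.single (z * x) 1 := rfl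
  have hg1I : g1 ∈ I := Ideal.subset_span ⟨1, 1, Or.inl (by rw [one_mul, mul_one])⟩
  have hg2I : g2 ∈ I := Ideal.subset_span ⟨1, 1, Or.inr (by rw [one_mul, mul_one])⟩
  -- the powers `x zⁱ x` belong to `I`, even with an arbitrary right factor
  have memI : ∀ i : ℕ, ∀ r : MonoidAlgebra K (FreeMonoid (Fin 3)),
      MonoidAlgebra.single (x * z ^ i * x) (1 : K) * r ∈ I := by
    intro i
    induction i with
    | zero =>
      intro r
      have hx : x * z ^ 0 * x = x * x := by rw [pow_zero, mul_one]
      rw [hx]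
      exact Ideal.subset_span ⟨1, r, Or.inl (by rw [one_mul])⟩
    | succ n ihn =>
      intro r
      have key : MonoidAlgebra.single (x * z ^ (n + 1) * x) (1 : K)
          = MonoidAlgebra.single (x * z ^ n * x) (1 : K) * MonoidAlgebra.single y 1
            - MonoidAlgebra.single (x * z ^ n) (1 : K) * g2 := by
        rw [hg2def, mul_sub, MonoidAlgebra.single_mul_single,
          MonoidAlgebra.single_mul_single, MonoidAlgebra.single_mul_single, one_mul]
        have e1 : x * z ^ n * x * y = x * z ^ n * (x * y) := by rw [mul_assoc]
        have e2 : x * z ^ n * (z * x) = x * z ^ (n + 1) * x := by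
          rw [← mul_assoc, mul_assoc x (z ^ n) z, ← pow_succ]
        rw [e1, e2, sub_sub_cancel]
      rw [key, sub_mul, mul_assoc]
      exact sub_mem (ihn (MonoidAlgebra.single y 1 * r))
        (Ideal.subset_span ⟨MonoidAlgebra.single (x * z ^ n) (1 : K), r, Or.inr rfl⟩)
  constructor
  · -- G ⊆ I
    rintro g hg
    simp only [G, Set.mem_insert_iff, Set.mem_setOf_eq] at hg
    rcases hg with rfl | rfl | ⟨i, hi, rfl⟩
    · exact hg1I
    · exact hg2I
    · have h := memI i 1
      rw [mul_one] at h
      exact h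
  · -- the Gröbner property
    intro f hfI hfne
    obtain ⟨hlmmem, hlmmax⟩ := hlm f hfne
    by_contra hcon
    push_neg at hcon
    -- leading monomials of the elements of G
    have hg1ne : g1 ≠ 0 := by
      intro h
      exact one_ne_zero (MonoidAlgebra.single_eq_zero.mp h)
    have hxyne : (x * y : FreeMonoid (Fin 3)) ≠ z * x := by
      intro h
      have := congrArg FreeMonoid.toList h
      exact absurd this (by decide)
    have hg2val : g2.coeff (x * y) = 1 := by
      rw [hg2def, MonoidAlgebra.coeff_sub, Finsupp.sub_apply]
      rw [MonoidAlgebra.coeff_single, MonoidAlgebra.coeff_single, Finsupp.single_eq_same, Finsupp.single_eq_of_ne' (Ne.symm hxyne), sub_zero]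
    have hg2ne : g2 ≠ 0 := by
      intro h
      rw [h, MonoidAlgebra.coeff_zero, Finsupp.zero_apply] at hg2val
      exact one_ne_zero hg2val.symm
    have hlmg1 : lm g1 = x * x := by
      have h := (hlm g1 hg1ne).1
      have hsupp : g1.coeff.support = {x * x} :=
        Finsupp.support_single_ne_zero _ one_ne_zero
      rw [hsupp, Finset.mem_singleton] at h
      exact h
    have hlmg2 : lm g2 = x * y := by
      have h := (hlm g2 hg2ne).1
      have hsub : g2.coeff.support ⊆ {x * y} ∪ {z * x} := by
        rw [hg2def, MonoidAlgebra.coeff_sub]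
        refine subset_trans Finsupp.support_sub ?_
        exact Finset.union_subset_union Finsupp.support_single_subset
          Finsupp.support_single_subset
      have h2 := hsub h
      rw [Finset.mem_union, Finset.mem_singleton, Finset.mem_singleton] at h2
      rcases h2 with h2 | h2
      · exact h2
      · exfalso
        have hmem : x * y ∈ g2.coeff.support := by
          rw [Finsupp.mem_support_iff, hg2val]
          exact one_ne_zero
        have hdg := (hlm g2 hg2ne).2 (x * y) hmem (by rw [h2]; exact hxyne)
        rw [h2] at hdg
        rcases hdg with hlen | ⟨_, hlex⟩
        · exact absurd hlen (by decide)
        · have hlex' : List.Lex r3 [(0:Fin 3), 1] [2, 0] := hlex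
          cases hlex' with
          | rel h => exact absurd h (by decide)
    -- forbidden patterns do not occur in L := (lm f).toList
    set L : List (Fin 3) := FreeMonoid.toList (lm f) with hLdef
    have hxx : ¬ ([0, 0] : W) <:+: L := by
      have h := hcon g1 (Set.mem_insert _ _) hg1ne
      rw [hlmg1] at h
      exact h
    have hxy : ¬ ([0, 1] : W) <:+: L := by
      have h := hcon g2 (Set.mem_insert_of_mem _ (Set.mem_insert _ _)) hg2ne
      rw [hlmg2] at h
      exact h
    have hzi : ∀ i : ℕ, FreeMonoid.toList ((FreeMonoid.of (2:Fin 3)) ^ i)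
        = List.replicate i 2 := by
      intro i
      induction i with
      | zero => rfl
      | succ n ih =>
        rw [pow_succ, toList_mul, ih, toList_of, ← List.replicate_succ']
    have hxz : ∀ i : ℕ, 1 ≤ i → ¬ (0 :: (List.replicate i 2 ++ [0])) <:+: L := by
      intro i hi
      have hgne : MonoidAlgebra.single (x * z ^ i * x) (1 : K) ≠ 0 :=
        fun h => one_ne_zero (MonoidAlgebra.single_eq_zero.mp h)
      have hgG : MonoidAlgebra.single (x * z ^ i * x) (1 : K) ∈ G :=
        Set.mem_insert_of_mem _ (Set.mem_insert_of_mem _ ⟨i, hi, rfl⟩)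
      have h := hcon _ hgG hgne
      have hlmg : lm (MonoidAlgebra.single (x * z ^ i * x) (1 : K)) = x * z ^ i * x := by
        have hm := (hlm _ hgne).1
        have hsupp : (MonoidAlgebra.single (x * z ^ i * x) (1 : K)).coeff.support
            = {x * z ^ i * x} := Finsupp.support_single_ne_zero _ one_ne_zero
        rw [hsupp, Finset.mem_singleton] at hm
        exact hm
      rw [hlmg] at h
      have htl : FreeMonoid.toList (x * z ^ i * x) = 0 :: (List.replicate i 2 ++ [0]) := by
        show FreeMonoid.toList (FreeMonoid.of (0:Fin 3) * FreeMonoid.of (2:Fin 3) ^ i *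
          FreeMonoid.of (0:Fin 3)) = _
        rw [toList_mul, toList_mul, hzi, toList_of]
        simp
      rw [htl] at h
      exact h
    have hnfL : nf L = some L := nf_normal L hxx hxy hxz
    -- N vanishes on I
    have hNf : N f = 0 := by
      let T : Ideal (MonoidAlgebra K (FreeMonoid (Fin 3))) :=
        { carrier := {h | ∀ r, N (r * h) = 0}
          add_mem' := fun ha hb r => by
            rw [mul_add, N_add, ha r, hb r, add_zero]
          zero_mem' := fun r => by rw [mul_zero, N_zero]
          smul_mem' := fun c a ha r => by
            rw [smul_eq_mul, ← mul_assoc]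
            exact ha (r * c) }
      have hsub : I ≤ T := by
        refine Ideal.span_le.mpr ?_
        rintro q ⟨a, b, rfl | rfl⟩
        · intro r
          have hr : r * (a * g1 * b) = (r * a) * g1 * b := by
            rw [← mul_assoc, ← mul_assoc]
          rw [hr]
          exact N_pg1q (r * a) b
        · intro r
          have hr : r * (a * g2 * b) = (r * a) * g2 * b := by
            rw [← mul_assoc, ← mul_assoc]
          rw [hr]
          exact N_pg2q (r * a) b
      have hfT := hsub hfI
      have h1 := hfT 1
      rw [one_mul] at h1
      exact h1
    -- the coefficient of the leading monomial of f in N f is nonzero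
    have happ : (N f).coeff (lm f) = 0 := by rw [hNf, MonoidAlgebra.coeff_zero, Finsupp.zero_apply]
    have heq : (N f).coeff (lm f) = f.coeff (lm f) := N_apply_eq f (lm f) hlmmax hnfL
    rw [heq] at happ
    exact (Finsupp.mem_support_iff.mp hlmmem) happ
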